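/- For all integers n and t with 0 < t < n − 1, the single-exclusion number satisfies S(n,t) ≤ Σ_{i=0}^{t} T(n−t+i−1, i+1, i). -/
import Mathlib


/-- An `(n,t)`-single-exclusion system: a collection of `t`-subsets (blocks) of an
`n`-set such that every subset `X` with `1 ≤ |X| ≤ t+1` has a block containing all
but exactly one element of `X`. -/
def IsSESystem (n t : ℕ) (S : Finset (Finset (Fin n))) : Prop :=
  (∀ B ∈ S, B.card = t) ∧
  ∀ X : Finset (Fin n), 1 ≤ X.card → X.card ≤ t + 1 → ∃ B ∈ S, (X \ B).card = 1

/-- The `(n,t)`-single-exclusion number `S(n,t)`: the least number of blocks in an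
`(n,t)`-single-exclusion system. -/
noncomputable def SENumber (n t : ℕ) : ℕ :=
  sInf {m : ℕ | ∃ S : Finset (Finset (Fin n)), IsSESystem n t S ∧ S.card = m}
/-- An `(n,s,t)`-Turán system: a collection of `t`-subsets (blocks) of an `n`-set
such that every `s`-subset contains at least one block. -/
def IsTuranSystem (n s t : ℕ) (T : Finset (Finset (Fin n))) : Prop :=
  (∀ B ∈ T, B.card = t) ∧
  ∀ X : Finset (Fin n), X.card = s → ∃ B ∈ T, B ⊆ X

/-- The `(n,s,t)`-Turán number `T(n,s,t)`: the least number of blocks in an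
`(n,s,t)`-Turán system. -/
noncomputable def turanNumber (n s t : ℕ) : ℕ :=
  sInf {m : ℕ | ∃ T : Finset (Finset (Fin n)), IsTuranSystem n s t T ∧ T.card = m}

lemma turan_exists (m s t' : ℕ) (h : t' ≤ s) :
    ∃ T : Finset (Finset (Fin m)), IsTuranSystem m s t' T ∧ T.card = turanNumber m s t' := by
  have hne : {k : ℕ | ∃ T : Finset (Finset (Fin m)), IsTuranSystem m s t' T ∧ T.card = k}.Nonempty := by
    refine ⟨_, Finset.powersetCard t' Finset.univ, ⟨?_, ?_⟩, rfl⟩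
    · intro B hB; exact Finset.mem_powersetCard_univ.1 hB
    · intro X hX
      obtain ⟨B, hBX, hBc⟩ := Finset.exists_subset_card_eq (le_trans h hX.ge)
      exact ⟨B, Finset.mem_powersetCard_univ.2 hBc, hBX⟩
  exact Nat.sInf_mem hne

lemma turan_nonempty {m s t' : ℕ} (hs : s ≤ m) {T : Finset (Finset (Fin m))}
    (hT : IsTuranSystem m s t' T) : T.Nonempty := by
  obtain ⟨X, -, hX⟩ := Finset.exists_subset_card_eq
    (s := (Finset.univ : Finset (Fin m))) (n := s) (by simpa using hs)
  obtain ⟨B, hB, -⟩ := hT.2 X hX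
  exact ⟨B, hB⟩

/-- the tail set: elements of value `> a + i`. -/
def Cset (n a i : ℕ) : Finset (Fin n) := Finset.univ.filter (fun x => a + i < x.val)

/-- block construction: a Turán block mapped up, together with the tail. -/
def blk (n a i : ℕ) (B : Finset (Fin (a + i))) : Finset (Fin n) :=
  (if h : a + i ≤ n then B.map (Fin.castLEEmb h) else ∅) ∪ Cset n a i

lemma mem_Cset {n a i : ℕ} {x : Fin n} : x ∈ Cset n a i ↔ a + i < x.val := by
  simp [Cset]

lemma card_Cset {n a i : ℕ} (h : a + i < n) : (Cset n a i).card = n - (a + i + 1) := by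
  have : Cset n a i = Finset.Ioi (⟨a + i, h⟩ : Fin n) := by
    ext x
    simp [Cset, Finset.mem_Ioi, Fin.lt_def]
  rw [this, Fin.card_Ioi]
  simp only [Fin.val_mk]
  omega

lemma mem_blk {n a i : ℕ} (h : a + i ≤ n) {B : Finset (Fin (a + i))} {x : Fin n} :
    x ∈ blk n a i B ↔ (∃ b ∈ B, (b : ℕ) = (x : ℕ)) ∨ a + i < x.val := by
  simp only [blk, dif_pos h, Finset.mem_union, Finset.mem_map, mem_Cset]
  constructor
  · rintro (⟨b, hb, rfl⟩ | hx)
    · exact Or.inl ⟨b, hb, rfl⟩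
    · exact Or.inr hx
  · rintro (⟨b, hb, hbx⟩ | hx)
    · exact Or.inl ⟨b, hb, Fin.ext hbx⟩
    · exact Or.inr hx

lemma card_blk {n a i : ℕ} (h : a + i < n) {B : Finset (Fin (a + i))} (hB : B.card = i) :
    (blk n a i B).card = i + (n - (a + i + 1)) := by
  rw [blk, dif_pos (le_of_lt h), Finset.card_union_of_disjoint, Finset.card_map, hB,
    card_Cset h]
  refine Finset.disjoint_left.2 ?_
  rintro x hx hx2
  rw [Finset.mem_map] at hx
  obtain ⟨b, -, rfl⟩ := hx
  rw [mem_Cset] at hx2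
  have : ((Fin.castLEEmb (le_of_lt h)) b : ℕ) = (b : ℕ) := rfl
  omega

theorem stmt8 (n t : ℕ) (ht : 0 < t) (htn : t + 1 < n) :
    SENumber n t ≤ ∑ i ∈ Finset.range (t + 1), turanNumber (n - t + i - 1) (i + 1) i := by
  classical
  set a := n - t - 1 with ha_def
  have ha : 1 ≤ a := by omega
  have han : a + t + 1 = n := by omega
  -- choose optimal Turán systems
  have hTex : ∀ i : ℕ, ∃ T : Finset (Finset (Fin (a + i))),
      IsTuranSystem (a + i) (i + 1) i T ∧ T.card = turanNumber (a + i) (i + 1) i :=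
    fun i => turan_exists _ _ _ (Nat.le_succ i)
  choose T hT hTcard using hTex
  set S : Finset (Finset (Fin n)) :=
    (Finset.range (t + 1)).biUnion (fun i => (T i).image (blk n a i)) with hS_def
  have hSE : IsSESystem n t S := by
    constructor
    · -- all blocks have card t
      intro D hD
      rw [hS_def, Finset.mem_biUnion] at hD
      obtain ⟨i, hi, hD⟩ := hD
      rw [Finset.mem_range] at hi
      rw [Finset.mem_image] at hD
      obtain ⟨B, hB, rfl⟩ := hD
      have hain : a + i < n := by omega
      rw [card_blk hain ((hT i).1 B hB)]
      omega
    · intro X hX1 hX2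
      set f : ℕ → ℕ := fun j => (X.filter (fun x : Fin n => (x : ℕ) < a + j)).card with hf_def
      have hstep : ∀ j, f (j + 1) = f j + (X.filter (fun x : Fin n => (x : ℕ) = a + j)).card := by
        intro j
        have heq : X.filter (fun x : Fin n => (x : ℕ) < a + (j + 1)) =
            X.filter (fun x : Fin n => (x : ℕ) < a + j) ∪ X.filter (fun x : Fin n => (x : ℕ) = a + j) := by
          rw [← Finset.filter_or]
          apply Finset.filter_congr
          intro x _
          constructor
          · intro hx
            rcases Nat.lt_succ_iff_lt_or_eq.1 (by omega : (x : ℕ) < (a + j) + 1) with h | h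
            · exact Or.inl h
            · exact Or.inr h
          · intro hx; omega
        have hdisj : Disjoint (X.filter (fun x : Fin n => (x : ℕ) < a + j))
            (X.filter (fun x : Fin n => (x : ℕ) = a + j)) := by
          refine Finset.disjoint_left.2 ?_
          rintro x hx1 hx2
          simp only [Finset.mem_filter] at hx1 hx2
          omega
        simp only [hf_def]
        rw [heq, Finset.card_union_of_disjoint hdisj]
      have hsing : ∀ j, (X.filter (fun x : Fin n => (x : ℕ) = a + j)).card ≤ 1 := by
        intro j
        refine Finset.card_le_one.2 ?_
        intro x hx y hy
        simp only [Finset.mem_filter] at hx hy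
        exact Fin.ext (by omega)
      have hmono : ∀ j, f j ≤ f (j + 1) := fun j => by rw [hstep j]; omega
      have hftop : f (t + 1) = X.card := by
        simp only [hf_def]
        rw [Finset.filter_true_of_mem]
        intro x _
        have := x.isLt
        omega
      -- the key dichotomy
      have hdich : (∃ j, ∃ hj : a + j < n, j ≤ t ∧ f j = 0 ∧ (⟨a + j, hj⟩ : Fin n) ∈ X) ∨
          (∃ j, j ≤ t ∧ f j = j + 1 ∧ f (j + 1) = j + 1) := by
        by_cases h0 : f 0 = 0
        · -- X has no element below a; take the minimum of X
          left
          have hXne : X.Nonempty := Finset.card_pos.1 (by omega)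
          set v := X.min' hXne with hv_def
          have hvmem : v ∈ X := X.min'_mem hXne
          have hvge : a ≤ (v : ℕ) := by
            by_contra hlt
            have : v ∈ X.filter (fun x : Fin n => (x : ℕ) < a + 0) := by
              simp only [Finset.mem_filter]
              exact ⟨hvmem, by omega⟩
            have := Finset.card_pos.2 ⟨v, this⟩
            simp only [hf_def] at h0
            omega
          refine ⟨(v : ℕ) - a, by omega, by omega, ?_, ?_⟩
          · -- f j = 0 : no element of X below v
            simp only [hf_def]
            rw [Finset.card_eq_zero, Finset.filter_eq_empty_iff]
            intro x hx hlt
            have hle := X.min'_le x hx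
            rw [← hv_def] at hle
            have : (v : ℕ) ≤ (x : ℕ) := hle
            omega
          · have : (⟨a + ((v : ℕ) - a), by omega⟩ : Fin n) = v := Fin.ext (by simp; omega)
            rw [this]; exact hvmem
        · -- f 0 ≥ 1
          right
          have hex : ∃ m, f m ≤ m := ⟨t + 1, by omega⟩
          set m := Nat.find hex with hm_def
          have hmspec : f m ≤ m := Nat.find_spec hex
          have hmle : m ≤ t + 1 := Nat.find_le (by omega)
          have hm0 : m ≠ 0 := by
            intro h
            rw [h] at hmspec
            omega
          obtain ⟨j, hj⟩ : ∃ j, m = j + 1 := ⟨m - 1, by omega⟩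
          have hjmin : ¬ f j ≤ j := Nat.find_min hex (by omega)
          have := hmono j
          rw [hj] at hmspec
          exact ⟨j, by omega, by omega, by omega⟩
      rcases hdich with ⟨j, hj, hjt, hfj, hgX⟩ | ⟨j, hjt, hfj, hfj1⟩
      · -- Case A: use any block of T j
        obtain ⟨B, hB⟩ := turan_nonempty (by omega : j + 1 ≤ a + j) (hT j)
        refine ⟨blk n a j B, ?_, ?_⟩
        · rw [hS_def, Finset.mem_biUnion]
          exact ⟨j, Finset.mem_range.2 (by omega), Finset.mem_image_of_mem _ hB⟩
        · have hXempty : ∀ x ∈ X, ¬ ((x : ℕ) < a + j) := by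
            simp only [hf_def] at hfj
            rw [Finset.card_eq_zero, Finset.filter_eq_empty_iff] at hfj
            exact hfj
          have : X \ blk n a j B = {(⟨a + j, hj⟩ : Fin n)} := by
            rw [Finset.eq_singleton_iff_unique_mem]
            constructor
            · rw [Finset.mem_sdiff]
              refine ⟨hgX, ?_⟩
              rw [mem_blk (le_of_lt hj)]
              rintro (⟨b, -, hb⟩ | hlt)
              · have := b.isLt; simp at hb; omega
              · simp at hlt
            · intro x hx
              rw [Finset.mem_sdiff, mem_blk (le_of_lt hj)] at hx
              obtain ⟨hxX, hxB⟩ := hx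
              push_neg at hxB
              have h1 := hXempty x hxX
              have h2 := hxB.2
              exact Fin.ext (by simp only [Fin.val_mk]; omega)
          rw [this, Finset.card_singleton]
      · -- Case B: Turán block inside X's head part
        have hajn : a + j < n := by omega
        have hnogj : ∀ x ∈ X, (x : ℕ) ≠ a + j := by
          have h := hstep j
          rw [hfj, hfj1] at h
          have : (X.filter (fun x : Fin n => (x : ℕ) = a + j)).card = 0 := by omega
          rw [Finset.card_eq_zero, Finset.filter_eq_empty_iff] at this
          exact this
        set Y := X.filter (fun x : Fin n => (x : ℕ) < a + j) with hY_def
        have hYcard : Y.card = j + 1 := hfj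
        have hbd : ∀ m ∈ Y.image (fun x : Fin n => (x : ℕ)), m < a + j := by
          intro m hm
          rw [Finset.mem_image] at hm
          obtain ⟨x, hx, rfl⟩ := hm
          simp only [hY_def, Finset.mem_filter] at hx
          exact hx.2
        set Y' : Finset (Fin (a + j)) := (Y.image (fun x : Fin n => (x : ℕ))).attachFin hbd with hY'_def
        have hY'card : Y'.card = j + 1 := by
          rw [hY'_def, Finset.card_attachFin,
            Finset.card_image_of_injective _ Fin.val_injective, hYcard]
        obtain ⟨B, hB, hBY'⟩ := (hT j).2 Y' hY'card
        have hBcard : B.card = j := (hT j).1 B hB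
        refine ⟨blk n a j B, ?_, ?_⟩
        · rw [hS_def, Finset.mem_biUnion]
          exact ⟨j, Finset.mem_range.2 (by omega), Finset.mem_image_of_mem _ hB⟩
        · have hmapsub : B.map (Fin.castLEEmb (le_of_lt hajn)) ⊆ Y := by
            intro x hx
            rw [Finset.mem_map] at hx
            obtain ⟨b, hb, rfl⟩ := hx
            have hbY' : b ∈ Y' := hBY' hb
            rw [hY'_def, Finset.mem_attachFin, Finset.mem_image] at hbY'
            obtain ⟨y, hy, hyv⟩ := hbY'
            have : (Fin.castLEEmb (le_of_lt hajn)) b = y := Fin.ext (by simp [← hyv])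
            rwa [this]
          have hXdiff : X \ blk n a j B = Y \ (B.map (Fin.castLEEmb (le_of_lt hajn))) := by
            ext x
            rw [Finset.mem_sdiff, Finset.mem_sdiff, mem_blk (le_of_lt hajn)]
            simp only [hY_def, Finset.mem_filter, Finset.mem_map]
            constructor
            · rintro ⟨hxX, hxB⟩
              push_neg at hxB
              have h1 := hxB.2
              have h2 := hnogj x hxX
              refine ⟨⟨hxX, by omega⟩, ?_⟩
              rintro ⟨b, hb, rfl⟩
              exact hxB.1 b hb rfl
            · rintro ⟨⟨hxX, hxlt⟩, hxB⟩
              refine ⟨hxX, ?_⟩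
              rintro (⟨b, hb, hbx⟩ | hgt)
              · exact hxB ⟨b, hb, Fin.ext hbx⟩
              · omega
          rw [hXdiff, Finset.card_sdiff_of_subset hmapsub, Finset.card_map, hYcard, hBcard]
          omega
  -- conclude with the cardinality bound
  have hcard : S.card ≤ ∑ i ∈ Finset.range (t + 1), turanNumber (n - t + i - 1) (i + 1) i := by
    calc S.card ≤ ∑ i ∈ Finset.range (t + 1), ((T i).image (blk n a i)).card :=
          Finset.card_biUnion_le
      _ ≤ ∑ i ∈ Finset.range (t + 1), (T i).card :=
          Finset.sum_le_sum (fun i _ => Finset.card_image_le)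
      _ = ∑ i ∈ Finset.range (t + 1), turanNumber (n - t + i - 1) (i + 1) i := by
          refine Finset.sum_congr rfl (fun i _ => ?_)
          rw [hTcard i]
          congr 1
          omega
  exact le_trans (Nat.sInf_le ⟨S, hSE, rfl⟩) hcard
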